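/- Let n ≥ 1 and N = 2^n. Every diagonal unitary matrix U = Matrix.diagonal u on ℂ^N (where u : Fin N → ℂ with ‖u j‖ = 1 for all j) can be written, up to global phase, as a product of at most 2^(n+1) − 3 elementary gates: there exist a real number Φ and a list L of N × N complex matrices with L.length ≤ 2^(n+1) − 3, such that every member of L is either a controlled-not matrix C_j^k (for some lines 1 ≤ j ≠ k ≤ n) or a z-rotation R_z^{(j)}(α) on some line j (for some 1 ≤ j ≤ n and α ∈ ℝ), and Matrix.diagonal u = exp(i·Φ) • L.prod. -/

import Mathlib

open Matrix

/-- The controlled-not gate `C_j^k` on `n` qubits (lines numbered `1,…,n`, line 1 holding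
the most significant bit, so line `l` corresponds to bit position `n - l`): the permutation
matrix replacing bit `b_k` of a basis index by `b_k ⊕ b_j`. -/
noncomputable def cnot (n j k : ℕ) : Matrix (Fin (2^n)) (Fin (2^n)) ℂ :=
  Matrix.of fun r c =>
    if (r : ℕ) = Nat.xor (c : ℕ) (if Nat.testBit (c : ℕ) (n - j) then 2^(n - k) else 0)
    then 1 else 0

/-- The z-rotation `R_z(α)` acting on line `j` of `n` qubits: the diagonal matrix whose
entry at a basis index is `exp(-i·α/2)` if bit `b_j = 0` and `exp(i·α/2)` if `b_j = 1`. -/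
noncomputable def rzLine (n j : ℕ) (α : ℝ) : Matrix (Fin (2^n)) (Fin (2^n)) ℂ :=
  Matrix.diagonal fun m =>
    if Nat.testBit (m : ℕ) (n - j)
    then Complex.exp (Complex.I * (α : ℂ) / 2)
    else Complex.exp (-(Complex.I * (α : ℂ) / 2))


namespace DiagSynth


/-- bit-flip function underlying `cnot` (positions `pj` = control, `pt` = target). -/
def gnat (pj pt m : ℕ) : ℕ := m ^^^ (if m.testBit pj then 2^pt else 0)

lemma testBit_gnat (pj pt m i : ℕ) :
    (gnat pj pt m).testBit i = ((m.testBit i).xor (m.testBit pj && decide (pt = i))) := by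
  unfold gnat
  rcases h : m.testBit pj <;>
    simp [h, Nat.testBit_xor, Nat.testBit_two_pow]

lemma testBit_gnat_ne {pt i : ℕ} (pj m : ℕ) (h : pt ≠ i) :
    (gnat pj pt m).testBit i = m.testBit i := by
  simp [testBit_gnat, h]

lemma testBit_gnat_pt {pj pt : ℕ} (m : ℕ) (h : pj ≠ pt) :
    (gnat pj pt m).testBit pt = ((m.testBit pt).xor (m.testBit pj)) := by
  simp [testBit_gnat]

lemma gnat_lt {n pt m : ℕ} (pj : ℕ) (hpt : pt < n) (hm : m < 2^n) : gnat pj pt m < 2^n := by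
  unfold gnat
  split
  · exact Nat.xor_lt_two_pow hm (Nat.pow_lt_pow_right (by norm_num) hpt)
  · simpa using hm

lemma gnat_invol {pj pt : ℕ} (m : ℕ) (h : pj ≠ pt) :
    gnat pj pt (gnat pj pt m) = m := by
  have d1 : decide (pt = pj) = false := by simp [Ne.symm h]
  apply Nat.eq_of_testBit_eq
  intro i
  simp only [testBit_gnat, d1, Bool.and_false, Bool.xor_false]
  rcases m.testBit i <;> rcases m.testBit pj <;> rcases hd : decide (pt = i) <;> simp

lemma gnat_comm3 {pj1 pj2 pt : ℕ} (m : ℕ) (h1 : pj1 ≠ pt) (h2 : pj2 ≠ pt) :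
    gnat pj1 pt (gnat pj2 pt (gnat pj1 pt m)) = gnat pj2 pt m := by
  have d1 : decide (pt = pj1) = false := by simp [Ne.symm h1]
  have d2 : decide (pt = pj2) = false := by simp [Ne.symm h2]
  apply Nat.eq_of_testBit_eq
  intro i
  simp only [testBit_gnat, d1, d2, Bool.and_false, Bool.xor_false]
  rcases m.testBit i <;> rcases m.testBit pj1 <;> rcases m.testBit pj2 <;>
    rcases hd : decide (pt = i) <;> simp

lemma gnat_shiftRight {pt s : ℕ} (pj m : ℕ) (h : pt < s) :
    (gnat pj pt m) >>> s = m >>> s := by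
  apply Nat.eq_of_testBit_eq
  intro i
  rw [Nat.testBit_shiftRight, Nat.testBit_shiftRight, testBit_gnat_ne pj m (by omega)]

lemma shift_eq_ite (q : ℕ) : q = 2 * (q >>> 1) + (if q.testBit 0 then 1 else 0) := by
  rw [Nat.shiftRight_one, Nat.testBit_zero]
  rcases Nat.mod_two_eq_zero_or_one q with h | h <;> simp [h] <;> omega

lemma shift_lt_two {n m : ℕ} (hn : 1 ≤ n) (hm : m < 2^n) : m >>> (n-1) < 2 := by
  rw [Nat.shiftRight_eq_div_pow]
  apply Nat.div_lt_of_lt_mul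
  calc m < 2^n := hm
  _ = 2 ^ (n-1) * 2 := by rw [← pow_succ]; congr 1; omega

lemma shift_top_eq {n m : ℕ} (hn : 1 ≤ n) (hm : m < 2^n) :
    m >>> (n-1) = if m.testBit (n-1) then 1 else 0 := by
  have h2 := shift_lt_two hn hm
  have hb : m.testBit (n-1) = (m >>> (n-1)).testBit 0 := by
    rw [Nat.testBit_shiftRight, Nat.add_zero]
  rw [hb]
  interval_cases h : (m >>> (n-1)) <;> simp


variable (n : ℕ)


noncomputable def phaseM (f : ℕ → ℝ) : Matrix (Fin (2^n)) (Fin (2^n)) ℂ :=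
  Matrix.diagonal fun m : Fin (2^n) => Complex.exp (Complex.I * (f (m : ℕ) : ℂ))

/-- the permutation on `Fin (2^n)` induced by `cnot n j t` (columns → preimage rows). -/
def finG (j t : ℕ) (c : Fin (2^n)) : Fin (2^n) :=
  ⟨gnat (n-j) (n-t) (c : ℕ) % 2^n, Nat.mod_lt _ (Nat.pow_pos (by norm_num))⟩

lemma finG_val {j t : ℕ} (ht1 : 1 ≤ t) (htn : t ≤ n) (c : Fin (2^n)) :
    (finG n j t c : ℕ) = gnat (n-j) (n-t) (c : ℕ) := by
  have hn : 1 ≤ n := le_trans ht1 htn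
  exact Nat.mod_eq_of_lt (gnat_lt _ (by omega) c.isLt)

lemma cnot_apply (j t : ℕ) (r c : Fin (2^n)) :
    cnot n j t r c = if (r : ℕ) = gnat (n-j) (n-t) (c : ℕ) then 1 else 0 := rfl

lemma mul_cnot {j t : ℕ} (ht1 : 1 ≤ t) (htn : t ≤ n)
    (M : Matrix (Fin (2^n)) (Fin (2^n)) ℂ) (r c : Fin (2^n)) :
    (M * cnot n j t) r c = M r (finG n j t c) := by
  rw [Matrix.mul_apply]
  have hx : ∀ x : Fin (2^n), cnot n j t x c = if x = finG n j t c then 1 else 0 := by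
    intro x
    rw [cnot_apply, ← finG_val n ht1 htn]
    congr 1
    simp [Fin.ext_iff]
  simp_rw [hx, mul_ite, mul_one, mul_zero]
  rw [Finset.sum_ite_eq' Finset.univ (finG n j t c) (fun x => M r x)]
  simp

lemma mul_phaseM (f : ℕ → ℝ) (M : Matrix (Fin (2^n)) (Fin (2^n)) ℂ) (r c : Fin (2^n)) :
    (M * phaseM n f) r c = M r c * Complex.exp (Complex.I * (f (c : ℕ) : ℂ)) :=
  Matrix.mul_diagonal _ M r c

lemma phaseM_apply (f : ℕ → ℝ) (r c : Fin (2^n)) :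
    phaseM n f r c = if r = c then Complex.exp (Complex.I * (f (r : ℕ) : ℂ)) else 0 :=
  Matrix.diagonal_apply _ r c

lemma phaseM_mul_phaseM (f g : ℕ → ℝ) :
    phaseM n f * phaseM n g = phaseM n (fun m => f m + g m) := by
  unfold phaseM
  rw [Matrix.diagonal_mul_diagonal]
  apply congrArg Matrix.diagonal
  funext m
  rw [← Complex.exp_add]
  congr 1
  push_cast
  ring

lemma phaseM_congr {f g : ℕ → ℝ} (h : ∀ m < 2^n, f m = g m) : phaseM n f = phaseM n g := by
  unfold phaseM
  apply congrArg Matrix.diagonal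
  funext m
  rw [h (m : ℕ) m.isLt]

lemma smul_phaseM (Φ : ℝ) (f : ℕ → ℝ) :
    Complex.exp (Complex.I * (Φ : ℂ)) • phaseM n f = phaseM n (fun m => Φ + f m) := by
  unfold phaseM
  ext r c
  rw [Matrix.smul_apply]
  rcases eq_or_ne r c with h | h
  · subst h
    rw [Matrix.diagonal_apply_eq, Matrix.diagonal_apply_eq, smul_eq_mul, ← Complex.exp_add]
    congr 1
    push_cast
    ring
  · rw [Matrix.diagonal_apply_ne _ h, Matrix.diagonal_apply_ne _ h, smul_zero]

lemma cnot_invol {j t : ℕ} (hj1 : 1 ≤ j) (hjn : j ≤ n) (ht1 : 1 ≤ t) (htn : t ≤ n)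
    (hjt : j ≠ t) : cnot n j t * cnot n j t = 1 := by
  have hne : n - j ≠ n - t := by omega
  ext r c
  rw [mul_cnot n ht1 htn, cnot_apply, finG_val n ht1 htn, gnat_invol _ hne, Matrix.one_apply]
  congr 1
  simp [Fin.ext_iff, eq_comm]

lemma key1 {j t : ℕ} (hj1 : 1 ≤ j) (hjn : j ≤ n) (ht1 : 1 ≤ t) (htn : t ≤ n) (hjt : j ≠ t)
    (f1 f2 fc : ℕ → ℝ) (h : ∀ m < 2^n, f1 m + f2 (gnat (n-j) (n-t) m) = fc m) :
    phaseM n f1 * (cnot n j t * phaseM n f2) = phaseM n fc * cnot n j t := by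
  have hne : n - j ≠ n - t := by omega
  rw [← mul_assoc]
  ext r c
  rw [mul_phaseM, mul_cnot n ht1 htn, mul_cnot n ht1 htn, phaseM_apply, phaseM_apply]
  rcases eq_or_ne r (finG n j t c) with hr | hr
  · rw [if_pos hr, if_pos hr]
    have hc : (c : ℕ) = gnat (n-j) (n-t) (r : ℕ) := by
      rw [hr, finG_val n ht1 htn, gnat_invol _ hne]
    rw [← Complex.exp_add]
    congr 1
    have := h (r : ℕ) r.isLt
    rw [← hc] at this
    rw [← this]
    push_cast
    ring
  · rw [if_neg hr, if_neg hr, zero_mul]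

lemma key2 {j1 j2 t : ℕ} (hj11 : 1 ≤ j1) (hj1n : j1 ≤ n) (hj21 : 1 ≤ j2) (hj2n : j2 ≤ n)
    (ht1 : 1 ≤ t) (htn : t ≤ n) (hj1t : j1 ≠ t) (hj2t : j2 ≠ t)
    (f1 f2 fc : ℕ → ℝ)
    (h : ∀ m < 2^n, f1 m + f2 (gnat (n-j1) (n-t) (gnat (n-j2) (n-t) m)) = fc m) :
    phaseM n f1 * cnot n j1 t * cnot n j2 t * phaseM n f2 * cnot n j1 t =
      phaseM n fc * cnot n j2 t := by
  have hne1 : n - j1 ≠ n - t := by omega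
  have hne2 : n - j2 ≠ n - t := by omega
  ext r c
  rw [mul_cnot n ht1 htn, mul_phaseM, mul_cnot n ht1 htn, mul_cnot n ht1 htn,
    mul_cnot n ht1 htn, phaseM_apply, phaseM_apply]
  have hval : (finG n j1 t (finG n j2 t (finG n j1 t c)) : ℕ) = (finG n j2 t c : ℕ) := by
    rw [finG_val n ht1 htn, finG_val n ht1 htn, finG_val n ht1 htn, finG_val n ht1 htn]
    exact gnat_comm3 _ hne1 hne2
  have hfin : finG n j1 t (finG n j2 t (finG n j1 t c)) = finG n j2 t c := Fin.ext hval
  rw [hfin]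
  rcases eq_or_ne r (finG n j2 t c) with hr | hr
  · rw [if_pos hr, if_pos hr]
    have hc : (c : ℕ) = gnat (n-j2) (n-t) (r : ℕ) := by
      rw [hr, finG_val n ht1 htn, gnat_invol _ hne2]
    have hgc : (finG n j1 t c : ℕ) = gnat (n-j1) (n-t) (gnat (n-j2) (n-t) (r : ℕ)) := by
      rw [finG_val n ht1 htn, hc]
    rw [← Complex.exp_add]
    congr 1
    have := h (r : ℕ) r.isLt
    rw [← hgc] at this
    rw [← this]
    push_cast
    ring
  · rw [if_neg hr, if_neg hr, zero_mul]


end DiagSynth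

namespace DiagSynth

variable (n : ℕ)

noncomputable def sgn (b : Bool) : ℝ := if b then 1 else -1

noncomputable def muxF (k t : ℕ) (α : ℕ → ℝ) (m : ℕ) : ℝ := sgn (m.testBit (n-t)) * α (m >>> (n-k)) / 2

lemma rz_phase (t : ℕ) (β : ℝ) :
    rzLine n t β = phaseM n (fun m => sgn (m.testBit (n-t)) * β / 2) := by
  unfold rzLine phaseM
  apply congrArg Matrix.diagonal
  funext m
  rcases h : (m : ℕ).testBit (n-t) <;> simp only [h, sgn, if_true, if_false] <;>
    · congr 1; push_cast; ring

def IsElem (M : Matrix (Fin (2^n)) (Fin (2^n)) ℂ) : Prop :=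
  (∃ j k, 1 ≤ j ∧ j ≤ n ∧ 1 ≤ k ∧ k ≤ n ∧ j ≠ k ∧ M = cnot n j k) ∨
  (∃ j α, 1 ≤ j ∧ j ≤ n ∧ M = rzLine n j α)

lemma lemP (k : ℕ) (hk : 1 ≤ k) :
    ∀ t, k < t → t ≤ n → ∀ α : ℕ → ℝ,
    ∃ L : List (Matrix (Fin (2^n)) (Fin (2^n)) ℂ),
      L.length = 2^(k+1) - 1 ∧ (∀ M ∈ L, IsElem n M) ∧
      L.prod = phaseM n (muxF n k t α) * cnot n k t := by
  induction k, hk using Nat.le_induction with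
  | base =>
    intro t h1t htn α
    have hn2 : 2 ≤ n := le_trans h1t htn
    refine ⟨[rzLine n t ((α 0 + α 1)/2), cnot n 1 t, rzLine n t ((α 0 - α 1)/2)],
      by norm_num, ?_, ?_⟩
    · intro M hM
      simp only [List.mem_cons, List.not_mem_nil, or_false] at hM
      rcases hM with h | h | h
      · exact Or.inr ⟨t, _, by omega, htn, h⟩
      · exact Or.inl ⟨1, t, by omega, by omega, by omega, htn, by omega, h⟩
      · exact Or.inr ⟨t, _, by omega, htn, h⟩
    · rw [List.prod_cons, List.prod_cons, List.prod_cons, List.prod_nil, mul_one,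
        rz_phase, rz_phase]
      apply key1 n (by omega) (by omega) (by omega) htn (by omega)
      intro m hm
      have hne : (n-1 : ℕ) ≠ n - t := by omega
      rw [testBit_gnat_pt m hne]
      unfold muxF
      rw [shift_top_eq (by omega) hm]
      rcases h1 : m.testBit (n-1) <;> rcases ht : m.testBit (n-t) <;>
        simp only [h1, ht, sgn, Bool.xor_false, Bool.xor_true, Bool.true_xor, Bool.false_xor,
          Bool.not_true, Bool.not_false, if_true, if_false] <;> norm_num <;> ring
  | succ k hk IH =>
    intro t hkt htn α
    have hk1n : k + 1 ≤ n := by omega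
    obtain ⟨Lp, hLpLen, hLpVal, hLpProd⟩ :=
      IH t (by omega) htn (fun q => (α (2*q) + α (2*q+1))/2)
    obtain ⟨Lm, hLmLen, hLmVal, hLmProd⟩ :=
      IH t (by omega) htn
        (fun q => (if q.testBit 0 then (-1:ℝ) else 1) * ((α (2*q) - α (2*q+1))/2))
    refine ⟨Lp ++ (cnot n (k+1) t :: Lm), ?_, ?_, ?_⟩
    · rw [List.length_append, List.length_cons, hLpLen, hLmLen]
      have h1 : 1 ≤ 2^(k+1) := Nat.one_le_two_pow
      have h2 : (2:ℕ)^(k+1+1) = 2^(k+1) + 2^(k+1) := by ring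
      omega
    · intro M hM
      rw [List.mem_append, List.mem_cons] at hM
      rcases hM with h | h | h
      · exact hLpVal M h
      · exact Or.inl ⟨k+1, t, by omega, by omega, by omega, htn, by omega, h⟩
      · exact hLmVal M h
    · rw [List.prod_append, List.prod_cons, hLpProd, hLmProd]
      simp only [← mul_assoc]
      apply key2 n (by omega) (by omega) (by omega) hk1n (by omega) htn (by omega) (by omega)
      intro m hm
      have hlt : (n - t : ℕ) < n - k := by omega
      have hne1 : (n-k : ℕ) ≠ n - t := by omega
      have hne2 : (n-(k+1) : ℕ) ≠ n - t := by omega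
      have hs1 : (gnat (n-k) (n-t) (gnat (n-(k+1)) (n-t) m)) >>> (n-k) = m >>> (n-k) := by
        rw [gnat_shiftRight _ _ hlt, gnat_shiftRight _ _ hlt]
      have hb' : (gnat (n-k) (n-t) (gnat (n-(k+1)) (n-t) m)).testBit (n-t)
          = ((m.testBit (n-t)).xor ((m.testBit (n-(k+1))).xor (m.testBit (n-k)))) := by
        rw [testBit_gnat_pt _ hne1, testBit_gnat_pt _ hne2,
          testBit_gnat_ne _ _ (Ne.symm hne1), Bool.xor_assoc]
      have e0 : (m >>> (n-k)).testBit 0 = m.testBit (n-k) := by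
        rw [Nat.testBit_shiftRight, Nat.add_zero]
      have e1 : (m >>> (n-(k+1))).testBit 0 = m.testBit (n-(k+1)) := by
        rw [Nat.testBit_shiftRight, Nat.add_zero]
      have hq' : m >>> (n-k) = (m >>> (n-(k+1))) >>> 1 := by
        rw [← Nat.shiftRight_add]; congr 1; omega
      have hqeq : m >>> (n-(k+1)) = 2 * (m >>> (n-k)) + (if m.testBit (n-(k+1)) then 1 else 0) := by
        conv_lhs => rw [shift_eq_ite (m >>> (n-(k+1)))]
        rw [← hq', e1]
      unfold muxF
      simp only [hs1, hb', e0]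
      rw [hqeq]
      rcases hbt : m.testBit (n-t) <;> rcases hbk : m.testBit (n-k) <;>
        rcases hbk1 : m.testBit (n-(k+1)) <;>
        simp only [hbt, hbk, hbk1, sgn, Bool.xor_false, Bool.xor_true, Bool.true_xor,
          Bool.false_xor, Bool.not_true, Bool.not_false, if_true, if_false] <;>
        norm_num <;> ring

lemma lemT (k t : ℕ) (hk : 1 ≤ k) (hkt : k < t) (htn : t ≤ n) (α : ℕ → ℝ) :
    ∃ L : List (Matrix (Fin (2^n)) (Fin (2^n)) ℂ),
      L.length = 2^(k+1) ∧ (∀ M ∈ L, IsElem n M) ∧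
      L.prod = phaseM n (muxF n k t α) := by
  obtain ⟨L, hLen, hVal, hProd⟩ := lemP n k hk t hkt htn α
  refine ⟨L ++ [cnot n k t], ?_, ?_, ?_⟩
  · rw [List.length_append, hLen, List.length_singleton]
    have h1 : 1 ≤ 2^(k+1) := Nat.one_le_two_pow
    omega
  · intro M hM
    rw [List.mem_append, List.mem_singleton] at hM
    rcases hM with h | h
    · exact hVal M h
    · exact Or.inl ⟨k, t, hk, by omega, by omega, htn, by omega, h⟩
  · rw [List.prod_append, List.prod_singleton, hProd, mul_assoc,
      cnot_invol n hk (by omega) (by omega) htn (by omega), mul_one]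

lemma lemQ (k : ℕ) (hk : 1 ≤ k) :
    k ≤ n → ∀ v : ℕ → ℝ,
    ∃ (Φ : ℝ) (L : List (Matrix (Fin (2^n)) (Fin (2^n)) ℂ)),
      L.length ≤ 2^(k+1) - 3 ∧ (∀ M ∈ L, IsElem n M) ∧
      phaseM n (fun m => v (m >>> (n-k))) = Complex.exp (Complex.I * (Φ : ℂ)) • L.prod := by
  induction k, hk using Nat.le_induction with
  | base =>
    intro hn v
    refine ⟨(v 0 + v 1)/2, [rzLine n 1 (v 1 - v 0)], by norm_num, ?_, ?_⟩
    · intro M hM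
      rw [List.mem_singleton] at hM
      exact Or.inr ⟨1, _, le_refl 1, hn, hM⟩
    · rw [List.prod_singleton, rz_phase, smul_phaseM]
      apply phaseM_congr
      intro m hm
      rw [shift_top_eq hn hm]
      rcases h : m.testBit (n-1) <;> simp only [h, sgn, if_true, if_false] <;> norm_num <;> ring
  | succ k hk IH =>
    intro hk1n v
    obtain ⟨Φ, L1, hL1len, hL1val, hL1prod⟩ := IH (by omega) (fun q => (v (2*q) + v (2*q+1))/2)
    obtain ⟨L2, hL2len, hL2val, hL2prod⟩ :=
      lemT n k (k+1) hk (by omega) hk1n (fun q => v (2*q+1) - v (2*q))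
    refine ⟨Φ, L1 ++ L2, ?_, ?_, ?_⟩
    · rw [List.length_append, hL2len]
      have h1 : 3 ≤ 2^(k+1) := by
        calc (3:ℕ) ≤ 2^2 := by norm_num
        _ ≤ 2^(k+1) := Nat.pow_le_pow_right (by norm_num) (by omega)
      have h2 : (2:ℕ)^(k+1+1) = 2^(k+1) + 2^(k+1) := by ring
      omega
    · intro M hM
      rw [List.mem_append] at hM
      rcases hM with h | h
      · exact hL1val M h
      · exact hL2val M h
    · rw [List.prod_append, ← smul_mul_assoc, ← hL1prod, hL2prod, phaseM_mul_phaseM]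
      apply phaseM_congr
      intro m hm
      have e1 : (m >>> (n-(k+1))).testBit 0 = m.testBit (n-(k+1)) := by
        rw [Nat.testBit_shiftRight, Nat.add_zero]
      have hq' : m >>> (n-k) = (m >>> (n-(k+1))) >>> 1 := by
        rw [← Nat.shiftRight_add]; congr 1; omega
      have hqeq : m >>> (n-(k+1)) = 2 * (m >>> (n-k)) + (if m.testBit (n-(k+1)) then 1 else 0) := by
        conv_lhs => rw [shift_eq_ite (m >>> (n-(k+1)))]
        rw [← hq', e1]
      unfold muxF
      rw [hqeq]
      rcases h : m.testBit (n-(k+1)) <;> simp only [h, sgn, if_true, if_false] <;>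
        norm_num <;> ring

end DiagSynth

open DiagSynth in
/-- every diagonal unitary on `n ≥ 1` qubits is, up to global phase, a product
of at most `2^(n+1) - 3` elementary gates (controlled-nots and one-qubit z-rotations). -/
theorem diagonal_circuit_synthesis (n : ℕ) (hn : 1 ≤ n)
    (u : Fin (2^n) → ℂ) (hu : ∀ j, ‖u j‖ = 1) :
    ∃ (Φ : ℝ) (L : List (Matrix (Fin (2^n)) (Fin (2^n)) ℂ)),
      L.length ≤ 2^(n+1) - 3 ∧
      (∀ M ∈ L,
        (∃ j k, 1 ≤ j ∧ j ≤ n ∧ 1 ≤ k ∧ k ≤ n ∧ j ≠ k ∧ M = cnot n j k) ∨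
        (∃ j α, 1 ≤ j ∧ j ≤ n ∧ M = rzLine n j α)) ∧
      Matrix.diagonal u = Complex.exp (Complex.I * (Φ : ℂ)) • L.prod := by
  obtain ⟨Φ, L, h1, h2, h3⟩ := lemQ n n hn le_rfl
    (fun m => if h : m < 2^n then (u ⟨m, h⟩).arg else 0)
  refine ⟨Φ, L, h1, h2, ?_⟩
  rw [← h3]
  unfold phaseM
  apply congrArg Matrix.diagonal
  funext m
  simp only [Nat.sub_self, Nat.shiftRight_zero, m.isLt, dif_pos, Fin.eta]
  have habs : ((‖u m‖ : ℝ) : ℂ) = 1 := by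
    rw [hu m]
    norm_num
  conv_lhs => rw [← Complex.norm_mul_exp_arg_mul_I (u m)]
  rw [habs, one_mul, mul_comm]
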